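/- arXiv:math/0105075 — 5 statements merged into one kernel-verified Lean document; each statement's English description precedes it below -/
import Mathlib

section
/- Let A be an m×n real matrix, H an n×n real matrix, v ∈ ℝ^m and w ∈ ℝ^n vectors such that the scalar δ = w ⬝ᵥ (H *ᵥ (Aᵀ *ᵥ v)) is nonzero, and let H' = H - (1/δ) • vecMulVec (H *ᵥ (Aᵀ *ᵥ v)) (Hᵀ *ᵥ w) be the scaled ABS update of H. Then H' *ᵥ (Aᵀ *ᵥ v) = 0 and H'ᵀ *ᵥ w = 0. -/
open Matrix

lemma my_vecMulVec_mulVec {n k : ℕ} (a : Fin n → ℝ) (b : Fin k → ℝ) (x : Fin k → ℝ) :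
    vecMulVec a b *ᵥ x = (b ⬝ᵥ x) • a := by
  ext i
  simp [vecMulVec_apply, mulVec, dotProduct, Finset.mul_sum, mul_comm, mul_left_comm]

lemma my_transpose_vecMulVec {n k : ℕ} (a : Fin n → ℝ) (b : Fin k → ℝ) :
    (vecMulVec a b)ᵀ = vecMulVec b a := by
  ext i j
  simp [vecMulVec_apply, mul_comm]

theorem abs_update_annihilates {m n : ℕ}
    (A : Matrix (Fin m) (Fin n) ℝ) (H : Matrix (Fin n) (Fin n) ℝ)
    (v : Fin m → ℝ) (w : Fin n → ℝ)
    (hδ : w ⬝ᵥ (H *ᵥ (Aᵀ *ᵥ v)) ≠ 0)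
    (H' : Matrix (Fin n) (Fin n) ℝ)
    (hH' : H' = H - (1 / (w ⬝ᵥ (H *ᵥ (Aᵀ *ᵥ v)))) •
      vecMulVec (H *ᵥ (Aᵀ *ᵥ v)) (Hᵀ *ᵥ w)) :
    H' *ᵥ (Aᵀ *ᵥ v) = 0 ∧ H'ᵀ *ᵥ w = 0 := by
  set u := Aᵀ *ᵥ v with hu
  set δ := w ⬝ᵥ (H *ᵥ u) with hd
  subst hH'
  constructor
  · rw [sub_mulVec, smul_mulVec, my_vecMulVec_mulVec]
    have h1 : (Hᵀ *ᵥ w) ⬝ᵥ u = δ := by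
      rw [mulVec_transpose, ← dotProduct_mulVec]
    rw [h1, smul_smul, one_div, inv_mul_cancel₀ hδ, one_smul, sub_self]
  · rw [transpose_sub, transpose_smul, my_transpose_vecMulVec, sub_mulVec,
      smul_mulVec, my_vecMulVec_mulVec]
    have h2 : (H *ᵥ u) ⬝ᵥ w = δ := by rw [hd, dotProduct_comm]
    rw [h2, smul_smul, one_div, inv_mul_cancel₀ hδ, one_smul, sub_self]
end

section
/- Let A be an m×n real matrix, v : ℕ → ℝ^m, w : ℕ → ℝ^n, and let H : ℕ → (n×n real matrices) satisfy the scaled ABS recursion: for every k with 1 ≤ k ≤ i, the denominator δ k = w k ⬝ᵥ (H k *ᵥ (Aᵀ *ᵥ v k)) is nonzero and H (k+1) = H k - (1/δ k) • vecMulVec (H k *ᵥ (Aᵀ *ᵥ v k)) ((H k)ᵀ *ᵥ w k). Then for every j with 1 ≤ j ≤ i, one has H (i+1) *ᵥ (Aᵀ *ᵥ v j) = 0 and (H (i+1))ᵀ *ᵥ (w j) = 0. -/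
open Matrix

private lemma vmv_mulVec {n : ℕ} (a b x : Fin n → ℝ) :
    vecMulVec a b *ᵥ x = (b ⬝ᵥ x) • a := by
  ext i
  simp [vecMulVec_apply, mulVec, dotProduct, Finset.mul_sum, Finset.sum_mul,
    mul_comm, mul_assoc, mul_left_comm]

private lemma vmv_transpose {n : ℕ} (a b : Fin n → ℝ) :
    (vecMulVec a b)ᵀ = vecMulVec b a := by
  ext i j
  simp [vecMulVec_apply, transpose_apply, mul_comm]

theorem abs_recursion_annihilates_all {m n : ℕ} (i : ℕ)
    (A : Matrix (Fin m) (Fin n) ℝ)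
    (v : ℕ → Fin m → ℝ) (w : ℕ → Fin n → ℝ)
    (H : ℕ → Matrix (Fin n) (Fin n) ℝ)
    (hrec : ∀ k, 1 ≤ k → k ≤ i →
      w k ⬝ᵥ (H k *ᵥ (Aᵀ *ᵥ v k)) ≠ 0 ∧
      H (k + 1) = H k - (1 / (w k ⬝ᵥ (H k *ᵥ (Aᵀ *ᵥ v k)))) •
        vecMulVec (H k *ᵥ (Aᵀ *ᵥ v k)) ((H k)ᵀ *ᵥ w k)) :
    ∀ j, 1 ≤ j → j ≤ i →
      H (i + 1) *ᵥ (Aᵀ *ᵥ v j) = 0 ∧ (H (i + 1))ᵀ *ᵥ w j = 0 := by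
  induction i with
  | zero => intro j h1 h2; omega
  | succ i ih =>
    have IH := ih (fun k hk hk' => hrec k hk (by omega))
    obtain ⟨hδ, hH⟩ := hrec (i + 1) (by omega) le_rfl
    set a : Fin n → ℝ := H (i + 1) *ᵥ (Aᵀ *ᵥ v (i + 1)) with ha
    set b : Fin n → ℝ := (H (i + 1))ᵀ *ᵥ w (i + 1) with hb
    set δ : ℝ := w (i + 1) ⬝ᵥ a with hδdef
    have hba : b ⬝ᵥ (Aᵀ *ᵥ v (i + 1)) = δ := by
      rw [hb, hδdef, ha, mulVec_transpose, ← dotProduct_mulVec]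
    intro j hj1 hj2
    rcases Nat.lt_or_ge j (i + 1) with hlt | hge
    · obtain ⟨h1, h2⟩ := IH j hj1 (by omega)
      constructor
      · rw [hH, sub_mulVec, smul_mulVec, vmv_mulVec, h1]
        have : b ⬝ᵥ (Aᵀ *ᵥ v j) = 0 := by
          rw [hb, mulVec_transpose, ← dotProduct_mulVec, h1, dotProduct_zero]
        rw [this, zero_smul, smul_zero, sub_zero]
      · rw [hH, transpose_sub, transpose_smul, vmv_transpose, sub_mulVec,
          smul_mulVec, vmv_mulVec, h2]
        have : a ⬝ᵥ w j = 0 := by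
          rw [ha, dotProduct_comm, dotProduct_mulVec, ← mulVec_transpose, h2,
            zero_dotProduct]
        rw [this, zero_smul, smul_zero, sub_zero]
    · have hji : j = i + 1 := by omega
      subst hji
      constructor
      · rw [hH, sub_mulVec, smul_mulVec, vmv_mulVec, hba,
          smul_smul, one_div, inv_mul_cancel₀ hδ, one_smul, sub_self]
      · rw [hH, transpose_sub, transpose_smul, vmv_transpose, sub_mulVec,
          smul_mulVec, vmv_mulVec, ← hb]
        have : a ⬝ᵥ w (i + 1) = δ := by rw [hδdef, dotProduct_comm]
        rw [this, smul_smul, one_div, inv_mul_cancel₀ hδ, one_smul, sub_self]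
end

section
/- Let A be an m×n real matrix, v : ℕ → ℝ^m, w z : ℕ → ℝ^n, H : ℕ → (n×n real matrices) satisfying the scaled ABS recursion H (k+1) = H k - (1/δ k) • vecMulVec (H k *ᵥ (Aᵀ *ᵥ v k)) ((H k)ᵀ *ᵥ w k) with δ k = w k ⬝ᵥ (H k *ᵥ (Aᵀ *ᵥ v k)) ≠ 0 for all 1 ≤ k ≤ i, and define the search vectors p k = (H k)ᵀ *ᵥ (z k). Assume also z k ⬝ᵥ (H k *ᵥ (Aᵀ *ᵥ v k)) ≠ 0 for 1 ≤ k ≤ i. Then the i×i matrix L with entries L j k = (v j) ⬝ᵥ (A *ᵥ (p k)) (1 ≤ j, k ≤ i) is lower triangular (L j k = 0 for j < k) with nonzero diagonal entries, hence nonsingular (the implicit factorization Vᵀ A P = L). -/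
open Matrix

lemma vecMulVec_mulVec' {n m : ℕ} (a : Fin m → ℝ) (b x : Fin n → ℝ) :
    vecMulVec a b *ᵥ x = (b ⬝ᵥ x) • a := by
  funext j
  simp [mulVec, vecMulVec_apply, dotProduct, Finset.mul_sum, mul_assoc, mul_comm, mul_left_comm]

lemma dp3 {n m : ℕ} (M : Matrix (Fin m) (Fin n) ℝ) (a : Fin m → ℝ) (x : Fin n → ℝ) :
    (Mᵀ *ᵥ a) ⬝ᵥ x = a ⬝ᵥ (M *ᵥ x) := by
  rw [mulVec_transpose, ← dotProduct_mulVec]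

theorem abs_implicit_factorization_lower_triangular {m n : ℕ} (i : ℕ)
    (A : Matrix (Fin m) (Fin n) ℝ)
    (v : ℕ → Fin m → ℝ) (w z : ℕ → Fin n → ℝ)
    (H : ℕ → Matrix (Fin n) (Fin n) ℝ) (p : ℕ → Fin n → ℝ)
    (hrec : ∀ k, 1 ≤ k → k ≤ i →
      w k ⬝ᵥ (H k *ᵥ (Aᵀ *ᵥ v k)) ≠ 0 ∧
      H (k + 1) = H k - (1 / (w k ⬝ᵥ (H k *ᵥ (Aᵀ *ᵥ v k)))) •
        vecMulVec (H k *ᵥ (Aᵀ *ᵥ v k)) ((H k)ᵀ *ᵥ w k))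
    (hp : ∀ k, 1 ≤ k → k ≤ i → p k = (H k)ᵀ *ᵥ z k)
    (hz : ∀ k, 1 ≤ k → k ≤ i → z k ⬝ᵥ (H k *ᵥ (Aᵀ *ᵥ v k)) ≠ 0)
    (L : Matrix (Fin i) (Fin i) ℝ)
    (hL : ∀ j k : Fin i, L j k = v (j.1 + 1) ⬝ᵥ (A *ᵥ p (k.1 + 1))) :
    (∀ j k : Fin i, (j : ℕ) < (k : ℕ) → L j k = 0) ∧
    (∀ k : Fin i, L k k ≠ 0) ∧ IsUnit L.det := by
  have key : ∀ j l : ℕ, 1 ≤ j → j < l → l ≤ i → H l *ᵥ (Aᵀ *ᵥ v j) = 0 := by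
    intro j l hj hjl hli
    induction l with
    | zero => omega
    | succ l ih =>
      rcases Nat.lt_or_ge j l with h | h
      · have h0 : H l *ᵥ (Aᵀ *ᵥ v j) = 0 := ih h (by omega)
        have hrl := (hrec l (by omega) (by omega)).2
        rw [hrl, sub_mulVec, smul_mulVec, vecMulVec_mulVec', dp3, h0,
          dotProduct_zero, zero_smul, smul_zero, sub_zero]
      · have hjl' : j = l := by omega
        subst hjl'
        have hδ := (hrec j (by omega) (by omega)).1
        have hrl := (hrec j (by omega) (by omega)).2
        rw [hrl, sub_mulVec, smul_mulVec, vecMulVec_mulVec', dp3, smul_smul,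
          one_div, inv_mul_cancel₀ hδ, one_smul, sub_self]
  have hLd : ∀ j k : Fin i, L j k = z (k.1 + 1) ⬝ᵥ (H (k.1 + 1) *ᵥ (Aᵀ *ᵥ v (j.1 + 1))) := by
    intro j k
    rw [hL j k, hp (k.1 + 1) (by omega) (by omega), ← dp3 A, dotProduct_comm, dp3]
  have hzero : ∀ j k : Fin i, (j : ℕ) < (k : ℕ) → L j k = 0 := by
    intro j k hjk
    rw [hLd, key (j.1 + 1) (k.1 + 1) (by omega) (by omega) (by omega), dotProduct_zero]
  have hdiag : ∀ k : Fin i, L k k ≠ 0 := by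
    intro k
    rw [hLd]
    exact hz (k.1 + 1) (by omega) (by omega)
  refine ⟨hzero, hdiag, ?_⟩
  have hdet : L.det = ∏ k, L k k := by
    apply det_of_lowerTriangular
    intro a b hab
    exact hzero a b hab
  rw [hdet, isUnit_iff_ne_zero]
  exact Finset.prod_ne_zero_iff.2 fun k _ => hdiag k
end

section
/- Let a : ℕ → ℝ^n and let H : ℕ → (n×n real matrices) and p : ℕ → ℝ^n satisfy the Huang recursion: H 1 = I, and for every k with 1 ≤ k ≤ i, p k = H k *ᵥ (a k), (a k) ⬝ᵥ (p k) ≠ 0, and H (k+1) = H k - (1/((a k) ⬝ᵥ (p k))) • vecMulVec (p k) (p k). Then for every k with 1 ≤ k ≤ i, the search vector p k lies in the span of {a 1, …, a k}. -/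
open Matrix

lemma vecMulVec_mulVec_aux {n : ℕ} (w x v : Fin n → ℝ) :
    vecMulVec w x *ᵥ v = (x ⬝ᵥ v) • w := by
  funext j
  simp [vecMulVec_apply, mulVec, dotProduct, Finset.mul_sum, Finset.sum_mul, mul_comm, mul_assoc, mul_left_comm]

theorem huang_search_vector_in_span {n : ℕ} (i : ℕ)
    (a : ℕ → Fin n → ℝ)
    (H : ℕ → Matrix (Fin n) (Fin n) ℝ) (p : ℕ → Fin n → ℝ)
    (hH1 : H 1 = 1)
    (hrec : ∀ k, 1 ≤ k → k ≤ i →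
      p k = H k *ᵥ a k ∧ a k ⬝ᵥ p k ≠ 0 ∧
      H (k + 1) = H k - (1 / (a k ⬝ᵥ p k)) • vecMulVec (p k) (p k)) :
    ∀ k, 1 ≤ k → k ≤ i →
      p k ∈ Submodule.span ℝ (a '' Set.Icc 1 k) := by
  have L : ∀ k, k ≤ i → ∀ v, H (k + 1) *ᵥ v - v ∈
      Submodule.span ℝ (a '' Set.Icc 1 k) := by
    intro k
    induction k with
    | zero =>
      intro _ v
      simp [hH1]
    | succ m ih =>
      intro hle v
      have hm : m ≤ i := Nat.le_of_succ_le hle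
      obtain ⟨hp, hne, hHrec⟩ := hrec (m + 1) (Nat.succ_le_succ (Nat.zero_le _)) hle
      have hpmem : p (m + 1) ∈ Submodule.span ℝ (a '' Set.Icc 1 (m + 1)) := by
        have h1 := ih hm (a (m + 1))
        have h2 : a (m + 1) ∈ Submodule.span ℝ (a '' Set.Icc 1 (m + 1)) :=
          Submodule.subset_span ⟨m + 1, ⟨Nat.succ_le_succ (Nat.zero_le _), le_refl _⟩, rfl⟩
        have hmono : Submodule.span ℝ (a '' Set.Icc 1 m) ≤
            Submodule.span ℝ (a '' Set.Icc 1 (m + 1)) := by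
          apply Submodule.span_mono
          exact Set.image_mono (Set.Icc_subset_Icc_right (Nat.le_succ _))
        have : p (m + 1) = (H (m + 1) *ᵥ a (m + 1) - a (m + 1)) + a (m + 1) := by
          rw [hp]; ring_nf
        rw [this]
        exact Submodule.add_mem _ (hmono h1) h2
      have key : H (m + 1 + 1) *ᵥ v - v =
          (H (m + 1) *ᵥ v - v) -
          ((1 / (a (m + 1) ⬝ᵥ p (m + 1))) * (p (m + 1) ⬝ᵥ v)) • p (m + 1) := by
        rw [hHrec, sub_mulVec, smul_mulVec, vecMulVec_mulVec_aux, smul_smul]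
        abel
      rw [key]
      have hmono : Submodule.span ℝ (a '' Set.Icc 1 m) ≤
          Submodule.span ℝ (a '' Set.Icc 1 (m + 1)) := by
        apply Submodule.span_mono
        exact Set.image_mono (Set.Icc_subset_Icc_right (Nat.le_succ _))
      exact Submodule.sub_mem _ (hmono (ih hm v)) (Submodule.smul_mem _ _ hpmem)
  intro k hk1 hki
  obtain ⟨m, rfl⟩ : ∃ m, k = m + 1 := ⟨k - 1, (Nat.succ_pred_eq_of_pos hk1).symm⟩
  obtain ⟨hp, _, _⟩ := hrec (m + 1) hk1 hki
  have h1 := L m (Nat.le_of_succ_le hki) (a (m + 1))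
  have h2 : a (m + 1) ∈ Submodule.span ℝ (a '' Set.Icc 1 (m + 1)) :=
    Submodule.subset_span ⟨m + 1, ⟨Nat.succ_le_succ (Nat.zero_le _), le_refl _⟩, rfl⟩
  have hmono : Submodule.span ℝ (a '' Set.Icc 1 m) ≤
      Submodule.span ℝ (a '' Set.Icc 1 (m + 1)) := by
    apply Submodule.span_mono
    exact Set.image_mono (Set.Icc_subset_Icc_right (Nat.le_succ _))
  have : p (m + 1) = (H (m + 1) *ᵥ a (m + 1) - a (m + 1)) + a (m + 1) := by
    rw [hp]; ring_nf
  rw [this]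
  exact Submodule.add_mem _ (hmono h1) h2
end

section
/- Let a : ℕ → ℝ^n and let H : ℕ → (n×n real matrices) and p : ℕ → ℝ^n satisfy the Huang recursion: H 1 = I, and for every k with 1 ≤ k ≤ i, p k = H k *ᵥ (a k), (a k) ⬝ᵥ (p k) ≠ 0, and H (k+1) = H k - (1/((a k) ⬝ᵥ (p k))) • vecMulVec (p k) (p k). Then the search vectors are mutually orthogonal: (p j) ⬝ᵥ (p k) = 0 for all 1 ≤ j < k ≤ i. -/
open Matrix

theorem huang_search_vectors_orthogonal {n : ℕ} (i : ℕ)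
    (a : ℕ → Fin n → ℝ)
    (H : ℕ → Matrix (Fin n) (Fin n) ℝ) (p : ℕ → Fin n → ℝ)
    (hH1 : H 1 = 1)
    (hrec : ∀ k, 1 ≤ k → k ≤ i →
      p k = H k *ᵥ a k ∧ a k ⬝ᵥ p k ≠ 0 ∧
      H (k + 1) = H k - (1 / (a k ⬝ᵥ p k)) • vecMulVec (p k) (p k)) :
    ∀ j k, 1 ≤ j → j < k → k ≤ i → p j ⬝ᵥ p k = 0 := by
  have hvmv : ∀ (u v x : Fin n → ℝ), vecMulVec u v *ᵥ x = (v ⬝ᵥ x) • u := by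
    intro u v x
    ext r
    simp [vecMulVec, mulVec, dotProduct, Finset.mul_sum, mul_assoc, mul_comm, mul_left_comm]
  have key : ∀ k, 1 ≤ k → k ≤ i →
      (∀ u v, (H k *ᵥ u) ⬝ᵥ v = u ⬝ᵥ (H k *ᵥ v)) ∧
      (∀ x, H k *ᵥ (H k *ᵥ x) = H k *ᵥ x) ∧
      (∀ j, 1 ≤ j → j < k → H k *ᵥ p j = 0) := by
    intro k hk1
    induction k, hk1 using Nat.le_induction with
    | base =>
      intro _
      refine ⟨?_, ?_, ?_⟩
      · intro u v; rw [hH1]; simp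
      · intro x; rw [hH1]; simp
      · intro j hj hjk; omega
    | succ k hk ih =>
      intro hki
      obtain ⟨hsym, hidem, hzero⟩ := ih (Nat.le_of_succ_le hki)
      obtain ⟨hp, hc, hHrec⟩ := hrec k hk (Nat.le_of_succ_le hki)
      set c := a k ⬝ᵥ p k with hcdef
      have happ : ∀ x, H (k + 1) *ᵥ x
          = H k *ᵥ x - (1 / c * (p k ⬝ᵥ x)) • p k := by
        intro x
        rw [hHrec, sub_mulVec, smul_mulVec, hvmv, smul_smul]
      have hHp : H k *ᵥ p k = p k := by rw [hp]; exact hidem (a k)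
      have hpp : p k ⬝ᵥ p k = c := by
        conv_lhs => rw [hp]
        rw [hsym, hidem, ← hp]
      have hpsym : ∀ x, p k ⬝ᵥ (H k *ᵥ x) = p k ⬝ᵥ x := by
        intro x
        rw [← hsym, hHp]
      refine ⟨?_, ?_, ?_⟩
      · intro u v
        rw [happ, happ, sub_dotProduct, dotProduct_sub, hsym,
          smul_dotProduct, dotProduct_smul]
        rw [dotProduct_comm (p k) u, dotProduct_comm (p k) v]
        simp only [smul_eq_mul]
        ring
      · intro x
        rw [happ, happ, mulVec_sub, mulVec_smul, hidem, hHp,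
          dotProduct_sub, dotProduct_smul, hpsym, hpp, smul_eq_mul]
        have : (1 / c * (p k ⬝ᵥ x - 1 / c * (p k ⬝ᵥ x) * c)) = 0 := by
          field_simp
          ring
        rw [this, zero_smul, sub_zero]
      · intro j hj hjk
        rcases Nat.lt_succ_iff_lt_or_eq.mp hjk with hjk' | rfl
        · have h1 : H k *ᵥ p j = 0 := hzero j hj hjk'
          have h2 : p k ⬝ᵥ p j = 0 := by
            rw [hp, hsym, h1, dotProduct_zero]
          rw [happ, h1, h2, mul_zero, zero_smul, sub_zero]
        · rw [happ, hHp, hpp]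
          rw [one_div, inv_mul_cancel₀ hc, one_smul, sub_self]
  intro j k hj hjk hki
  obtain ⟨hsym, _, hzero⟩ := key k (le_of_lt (lt_of_le_of_lt hj hjk)) hki
  obtain ⟨hp, -, -⟩ := hrec k (le_of_lt (lt_of_le_of_lt hj hjk)) hki
  rw [hp, ← hsym, hzero j hj hjk, zero_dotProduct]
end
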